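/- Let x^d ∈ P(V) be strictly positive, let w ∈ {0,1}^{M×M} be symmetric with zero diagonal such that the undirected graph on {1,...,M} with an edge between i and j whenever w_{ij} = 1 is connected, and let g, G(·), D be as in the density-feedback construction. Then the closed-loop system ẋ = G(x)^T D x is globally asymptotically stable at x^d on the simplex: G(x^d) = 0, and every differentiable solution x : [0,∞) → ℝ^M with x'(t) = G(x(t))^T D x(t) for all t ≥ 0 and x(0) ∈ P(V) satisfies lim_{t→∞} x(t) = x^d. -/

import Mathlib

open Matrix Filter

noncomputable section

/-- The probability simplex `P(V)` in `ℝ^M`. -/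
def probSimplex (M : ℕ) : Set (Fin M → ℝ) :=
  {x | (∀ i, 0 ≤ x i) ∧ ∑ i, x i = 1}

/-- `g_i(x) = (x_i - x^d_i)²`. -/
def gfun {M : ℕ} (xd x : Fin M → ℝ) (i : Fin M) : ℝ := (x i - xd i) ^ 2

/-- The density-feedback transition-rate matrix `G(x)`:
`G(x)^{ij} = w_{ij} (g_i(x) + g_j(x))` for `i ≠ j`, and
`G(x)^{ii} = -∑_{k ≠ i} w_{ik} (g_i(x) + g_k(x))`. -/
def Gmat {M : ℕ} (xd : Fin M → ℝ) (w : Matrix (Fin M) (Fin M) ℝ) (x : Fin M → ℝ) :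
    Matrix (Fin M) (Fin M) ℝ :=
  fun i j =>
    if i = j then
      -∑ k ∈ Finset.univ.filter (fun k => k ≠ i), w i k * (gfun xd x i + gfun xd x k)
    else w i j * (gfun xd x i + gfun xd x j)

/-- The diagonal matrix `D` with `D^{ii} = 1 / x^d_i`. -/
def Dmat {M : ℕ} (xd : Fin M → ℝ) : Matrix (Fin M) (Fin M) ℝ :=
  Matrix.diagonal fun i => 1 / xd i

/-- Lyapunov function `V(x) = ∑ (x_i - xd_i)²/xd_i`. -/
def Vfun {M : ℕ} (xd x : Fin M → ℝ) : ℝ := ∑ i, (x i - xd i) ^ 2 / xd i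

/-- Dissipation functional. -/
def Ffun {M : ℕ} (xd : Fin M → ℝ) (w : Matrix (Fin M) (Fin M) ℝ) (x : Fin M → ℝ) : ℝ :=
  ∑ i, ∑ k, w i k * (gfun xd x i + gfun xd x k) * (x i / xd i - x k / xd k) ^ 2

namespace ClosedLoopAux

variable {M : ℕ} {xd : Fin M → ℝ} {w : Matrix (Fin M) (Fin M) ℝ}

lemma mulVec_eq (hdiag : ∀ i, w i i = 0) (hsymm : ∀ i j, w i j = w j i) (x : Fin M → ℝ) (i : Fin M) :
    ((Gmat xd w x)ᵀ.mulVec ((Dmat xd).mulVec x)) i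
      = ∑ k, w i k * (gfun xd x i + gfun xd x k) * (x k / xd k - x i / xd i) := by
  have hD : ∀ j, (Dmat xd).mulVec x j = x j / xd j := by
    intro j; rw [Dmat, Matrix.mulVec_diagonal]; ring
  have hterm : ∀ j, (Gmat xd w x)ᵀ i j * ((Dmat xd).mulVec x) j
      = w i j * (gfun xd x i + gfun xd x j) * (x j / xd j)
        - (if j = i then (∑ k ∈ Finset.univ.filter (fun k => k ≠ i),
            w i k * (gfun xd x i + gfun xd x k)) * (x i / xd i) else 0) := by
    intro j
    rw [Matrix.transpose_apply, hD]
    by_cases h : j = i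
    · subst h
      have hG : (Gmat xd w x) j j = -∑ k ∈ Finset.univ.filter (fun k => k ≠ j),
          w j k * (gfun xd x j + gfun xd x k) := by simp [Gmat]
      rw [hG, hdiag, if_pos rfl]
      ring
    · simp only [Gmat, if_neg h, if_neg h, hsymm j i]
      ring
  rw [Matrix.mulVec, dotProduct]
  simp only [hterm]
  rw [Finset.sum_sub_distrib, Finset.sum_ite_eq' Finset.univ i]
  have h2 : ∑ k ∈ Finset.univ.filter (fun k => k ≠ i), w i k * (gfun xd x i + gfun xd x k)
      = ∑ k, w i k * (gfun xd x i + gfun xd x k) := by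
    rw [Finset.sum_filter]
    apply Finset.sum_congr rfl
    intro k _
    by_cases h : k = i
    · subst h; simp [hdiag]
    · simp [h]
  simp only [Finset.mem_univ, if_true, h2, Finset.sum_mul]
  rw [← Finset.sum_sub_distrib]
  apply Finset.sum_congr rfl
  intro k _
  ring

lemma W_eq (hpos : ∀ i, 0 < xd i) (hdiag : ∀ i, w i i = 0) (hsymm : ∀ i j, w i j = w j i)
    (x : Fin M → ℝ) :
    ∑ i, 2 * (x i - xd i) / xd i * ((Gmat xd w x)ᵀ.mulVec ((Dmat xd).mulVec x)) i
      = - Ffun xd w x := by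
  have key : ∀ i, 2 * (x i - xd i) / xd i = 2 * (x i / xd i - 1) := by
    intro i
    have hne := (hpos i).ne'
    field_simp
  simp only [mulVec_eq hdiag hsymm, key, Finset.mul_sum]
  set u : Fin M → ℝ := fun i => x i / xd i with hu
  set a : Fin M → Fin M → ℝ := fun i k => w i k * (gfun xd x i + gfun xd x k) with ha
  have hasymm : ∀ i k, a i k = a k i := by
    intro i k; simp only [ha, hsymm i k]; ring
  have hsum : ∀ (f g : Fin M → Fin M → ℝ),
      (∑ i, ∑ k, f i k) + (∑ i, ∑ k, g i k) = ∑ i, ∑ k, (f i k + g i k) := by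
    intro f g
    rw [← Finset.sum_add_distrib]
    exact Finset.sum_congr rfl fun i _ => (Finset.sum_add_distrib).symm
  set S := ∑ i, ∑ k, 2 * (u i - 1) * (a i k * (u k - u i)) with hS
  have swap : S = ∑ i, ∑ k, 2 * (u k - 1) * (a i k * (u i - u k)) := by
    rw [hS, Finset.sum_comm]
    apply Finset.sum_congr rfl; intro i _
    apply Finset.sum_congr rfl; intro k _
    rw [hasymm i k]
  have h2S : S + S = ∑ i, ∑ k, (-2) * (a i k * (u i - u k)^2) := by
    nth_rewrite 2 [swap]
    rw [hS, hsum]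
    apply Finset.sum_congr rfl; intro i _
    apply Finset.sum_congr rfl; intro k _
    ring
  have hF : Ffun xd w x = ∑ i, ∑ k, a i k * (u i - u k)^2 := by
    unfold Ffun
    apply Finset.sum_congr rfl; intro i _
    apply Finset.sum_congr rfl; intro k _
    simp only [ha, hu]
  have hneg : ∑ i, ∑ k, (-2:ℝ) * (a i k * (u i - u k)^2)
      = -2 * ∑ i, ∑ k, a i k * (u i - u k)^2 := by
    rw [Finset.mul_sum]
    apply Finset.sum_congr rfl; intro i _
    rw [Finset.mul_sum]
  have hgoal : ∑ i, ∑ k, 2 * (u i - 1) * (a i k * (u k - u i))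
      = - Ffun xd w x := by
    rw [← hS, hF]
    have h2S' := h2S
    rw [hneg] at h2S'
    linarith
  rw [← hgoal]

lemma sum_mulVec_zero (hdiag : ∀ i, w i i = 0) (hsymm : ∀ i j, w i j = w j i) (x : Fin M → ℝ) :
    ∑ i, ((Gmat xd w x)ᵀ.mulVec ((Dmat xd).mulVec x)) i = 0 := by
  simp only [mulVec_eq hdiag hsymm]
  set a : Fin M → Fin M → ℝ := fun i k => w i k * (gfun xd x i + gfun xd x k) with ha
  have hasymm : ∀ i k, a i k = a k i := by
    intro i k; simp only [ha, hsymm i k]; ring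
  have hsum : ∀ (f g : Fin M → Fin M → ℝ),
      (∑ i, ∑ k, f i k) + (∑ i, ∑ k, g i k) = ∑ i, ∑ k, (f i k + g i k) := by
    intro f g
    rw [← Finset.sum_add_distrib]
    exact Finset.sum_congr rfl fun i _ => (Finset.sum_add_distrib).symm
  set S := ∑ i, ∑ k, a i k * (x k / xd k - x i / xd i) with hS
  have swap : S = ∑ i, ∑ k, a i k * (x i / xd i - x k / xd k) := by
    rw [hS, Finset.sum_comm]
    apply Finset.sum_congr rfl; intro i _
    apply Finset.sum_congr rfl; intro k _
    rw [hasymm k i]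
  have h2S : S + S = 0 := by
    nth_rewrite 2 [swap]
    rw [hS, hsum]
    apply Finset.sum_eq_zero; intro i _
    apply Finset.sum_eq_zero; intro k _
    ring
  linarith

lemma Ffun_nonneg (h01 : ∀ i j, w i j = 0 ∨ w i j = 1) (x : Fin M → ℝ) :
    0 ≤ Ffun xd w x := by
  apply Finset.sum_nonneg; intro i _
  apply Finset.sum_nonneg; intro k _
  have hw : 0 ≤ w i k := by rcases h01 i k with h | h <;> rw [h] <;> norm_num
  have hg : 0 ≤ gfun xd x i + gfun xd x k := by unfold gfun; positivity
  positivity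

lemma Vfun_nonneg (hpos : ∀ i, 0 < xd i) (x : Fin M → ℝ) : 0 ≤ Vfun xd x := by
  apply Finset.sum_nonneg; intro i _
  have := hpos i
  positivity

lemma Vfun_eq_zero_iff (hpos : ∀ i, 0 < xd i) (x : Fin M → ℝ) :
    Vfun xd x = 0 ↔ x = xd := by
  constructor
  · intro h
    funext i
    have h0 := (Finset.sum_eq_zero_iff_of_nonneg (fun i _ => by
      have := hpos i; positivity)).1 h i (Finset.mem_univ i)
    have hp := hpos i
    have hp' := hp.ne'
    field_simp at h0
    rw [mul_zero] at h0
    have := pow_eq_zero_iff (n := 2) (by norm_num) |>.1 h0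
    linarith
  · rintro rfl; simp [Vfun]

lemma Ffun_pos (hpos : ∀ i, 0 < xd i) (hxdsum : ∑ i, xd i = 1)
    (h01 : ∀ i j, w i j = 0 ∨ w i j = 1)
    (hconn : ∀ i j : Fin M, Relation.ReflTransGen (fun a b => w a b = 1) i j)
    (x : Fin M → ℝ) (hsum : ∑ i, x i = 1) (hne : x ≠ xd) :
    0 < Ffun xd w x := by
  rcases lt_or_eq_of_le (Ffun_nonneg h01 x) with h | h
  · exact h
  exfalso
  have hterm : ∀ i k, w i k * (gfun xd x i + gfun xd x k) * (x i / xd i - x k / xd k) ^ 2 = 0 := by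
    intro i k
    have h1 := (Finset.sum_eq_zero_iff_of_nonneg (fun i _ => Finset.sum_nonneg fun k _ => by
      have hw : 0 ≤ w i k := by rcases h01 i k with h | h <;> rw [h] <;> norm_num
      have hg : 0 ≤ gfun xd x i + gfun xd x k := by unfold gfun; positivity
      positivity)).1 h.symm i (Finset.mem_univ i)
    exact (Finset.sum_eq_zero_iff_of_nonneg (fun k _ => by
      have hw : 0 ≤ w i k := by rcases h01 i k with h | h <;> rw [h] <;> norm_num
      have hg : 0 ≤ gfun xd x i + gfun xd x k := by unfold gfun; positivity
      positivity)).1 h1 k (Finset.mem_univ k)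
  have hedge : ∀ i k, w i k = 1 → x i / xd i = x k / xd k := by
    intro i k hw
    have hik := hterm i k
    rw [hw, one_mul] at hik
    rcases mul_eq_zero.1 hik with hg | hsq
    · unfold gfun at hg
      have hxi : x i = xd i := by nlinarith [sq_nonneg (x i - xd i), sq_nonneg (x k - xd k)]
      have hxk : x k = xd k := by nlinarith [sq_nonneg (x i - xd i), sq_nonneg (x k - xd k)]
      rw [hxi, hxk, div_self (hpos i).ne', div_self (hpos k).ne']
    · have := pow_eq_zero_iff (n := 2) (by norm_num) |>.1 hsq
      linarith
  have hconst : ∀ i k : Fin M, x i / xd i = x k / xd k := by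
    intro i k
    induction hconn i k with
    | refl => rfl
    | tail _ hstep ih => exact ih.trans (hedge _ _ hstep)
  apply hne
  by_cases hM : M = 0
  · subst hM; funext i; exact absurd i.2 (by omega)
  obtain ⟨i0⟩ : Nonempty (Fin M) := ⟨⟨0, Nat.pos_of_ne_zero hM⟩⟩
  set c := x i0 / xd i0 with hc
  have hxc : ∀ i, x i = c * xd i := by
    intro i
    have h0 : x i = (x i / xd i) * xd i := (div_mul_cancel₀ (x i) (hpos i).ne').symm
    rw [h0, hconst i i0, hc]
  have hsc : ∑ i, x i = c * ∑ i, xd i := by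
    rw [Finset.mul_sum]; exact Finset.sum_congr rfl fun i _ => hxc i
  rw [hsum, hxdsum, mul_one] at hsc
  funext i
  rw [hxc i, ← hsc, one_mul]

lemma Vfun_continuous : Continuous (fun x : Fin M → ℝ => Vfun xd x) := by
  unfold Vfun
  exact continuous_finset_sum _ fun i _ =>
    (((continuous_apply i).sub continuous_const).pow 2).div_const _

lemma Ffun_continuous : Continuous (fun x : Fin M → ℝ => Ffun xd w x) := by
  unfold Ffun gfun
  refine continuous_finset_sum _ fun i _ => continuous_finset_sum _ fun k _ => ?_
  refine Continuous.mul (Continuous.mul continuous_const ?_) ?_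
  · exact (((continuous_apply i).sub continuous_const).pow 2).add
      (((continuous_apply k).sub continuous_const).pow 2)
  · exact (((continuous_apply i).div_const _).sub ((continuous_apply k).div_const _)).pow 2

lemma coord_sq_le_V (hpos : ∀ i, 0 < xd i) (x : Fin M → ℝ) (i : Fin M) :
    (x i - xd i) ^ 2 ≤ xd i * Vfun xd x := by
  have h1 : (x i - xd i) ^ 2 / xd i ≤ Vfun xd x := by
    apply Finset.single_le_sum (f := fun j => (x j - xd j)^2 / xd j)
      (fun j _ => by have := hpos j; positivity) (Finset.mem_univ i)
  have h2 := hpos i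
  calc (x i - xd i)^2 = xd i * ((x i - xd i)^2 / xd i) := by field_simp
    _ ≤ xd i * Vfun xd x := by nlinarith

lemma isCompact_K (hpos : ∀ i, 0 < xd i) (hxd1 : ∀ i, xd i ≤ 1) (ε c : ℝ) (hc : 0 ≤ c) :
    IsCompact {p : Fin M → ℝ | (∑ i, p i = 1) ∧ ε ≤ Vfun xd p ∧ Vfun xd p ≤ c} := by
  apply Metric.isCompact_of_isClosed_isBounded
  · apply IsClosed.inter
    · exact isClosed_eq (continuous_finset_sum _ fun i _ => continuous_apply i) continuous_const
    · exact IsClosed.inter (isClosed_le continuous_const Vfun_continuous)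
        (isClosed_le Vfun_continuous continuous_const)
  · rw [isBounded_iff_forall_norm_le]
    refine ⟨(‖xd‖ + Real.sqrt c), fun p hp => ?_⟩
    obtain ⟨hs, hε, hcle⟩ := hp
    have hR : (0:ℝ) ≤ ‖xd‖ + Real.sqrt c := by positivity
    rw [pi_norm_le_iff_of_nonneg hR]
    intro i
    have h1 : (p i - xd i)^2 ≤ xd i * Vfun xd p := coord_sq_le_V hpos p i
    have h2 : (p i - xd i)^2 ≤ c := by nlinarith [hpos i, hxd1 i, Vfun_nonneg hpos p]
    have h3 : |p i - xd i| ≤ Real.sqrt c := by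
      rw [← Real.sqrt_sq_eq_abs]
      exact Real.sqrt_le_sqrt h2
    have h4 : |xd i| ≤ ‖xd‖ := norm_le_pi_norm xd i
    calc ‖p i‖ = |xd i + (p i - xd i)| := by norm_num
      _ ≤ |xd i| + |p i - xd i| := abs_add_le _ _
      _ ≤ ‖xd‖ + Real.sqrt c := add_le_add h4 h3

/-- antitone from right derivatives nonpositive on `Ioi 0`. -/
lemma antitone_aux {f g : ℝ → ℝ}
    (hf : ∀ t ∈ Set.Ici (0:ℝ), HasDerivWithinAt f (g t) (Set.Ici 0) t)
    (hg : ∀ t ∈ Set.Ioi (0:ℝ), g t ≤ 0) : AntitoneOn f (Set.Ici 0) := by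
  apply antitoneOn_of_deriv_nonpos (convex_Ici 0)
    (fun t ht => (hf t ht).continuousWithinAt)
  · rw [interior_Ici]
    intro t ht
    exact ((hf t (Set.Ioi_subset_Ici_self ht)).hasDerivAt (Ici_mem_nhds ht)).differentiableAt.differentiableWithinAt
  · rw [interior_Ici]
    intro t ht
    rw [((hf t (Set.Ioi_subset_Ici_self ht)).hasDerivAt (Ici_mem_nhds ht)).deriv]
    exact hg t ht

end ClosedLoopAux

open ClosedLoopAux in
/-- for a connected bidirected graph encoded by the 0/1 symmetric
adjacency matrix `w`, the closed-loop system `ẋ = G(x)ᵀ D x` is globally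
asymptotically stable at `x^d` on the simplex: the control vanishes at equilibrium
(`G(x^d) = 0`) and every solution starting in `P(V)` converges to `x^d`. -/
theorem closed_loop_global_asymptotic_stability
    (M : ℕ) (xd : Fin M → ℝ)
    (hxd : xd ∈ probSimplex M) (hpos : ∀ i, 0 < xd i)
    (w : Matrix (Fin M) (Fin M) ℝ)
    (h01 : ∀ i j, w i j = 0 ∨ w i j = 1)
    (hsymm : ∀ i j, w i j = w j i) (hdiag : ∀ i, w i i = 0)
    (hconn : ∀ i j : Fin M, Relation.ReflTransGen (fun a b => w a b = 1) i j) :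
    Gmat xd w xd = 0 ∧
    ∀ x : ℝ → Fin M → ℝ,
      (∀ t : ℝ, 0 ≤ t →
        HasDerivWithinAt x ((Gmat xd w (x t))ᵀ.mulVec ((Dmat xd).mulVec (x t)))
          (Set.Ici 0) t) →
      x 0 ∈ probSimplex M →
      Tendsto x atTop (nhds xd) := by
  obtain ⟨hxdnn, hxdsum⟩ := hxd
  constructor
  · ext i j
    by_cases h : i = j
    · subst h; simp [Gmat, gfun]
    · simp [Gmat, h, gfun]
  intro x hx hx0
  set v : ℝ → Fin M → ℝ :=
    fun t => (Gmat xd w (x t))ᵀ.mulVec ((Dmat xd).mulVec (x t)) with hv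
  -- coordinatewise derivatives
  have hxc : ∀ i, ∀ t ∈ Set.Ici (0:ℝ), HasDerivWithinAt (fun s => x s i) (v t i) (Set.Ici 0) t := by
    intro i t ht
    exact (hasDerivWithinAt_pi.1 (hx t ht)) i
  -- sum conservation
  have hsum1 : ∀ t ∈ Set.Ici (0:ℝ), ∑ i, x t i = 1 := by
    have hds : ∀ t ∈ Set.Ici (0:ℝ),
        HasDerivWithinAt (fun s => ∑ i, x s i) 0 (Set.Ici 0) t := by
      intro t ht
      have := HasDerivWithinAt.fun_sum (s := (Set.Ici (0:ℝ)))
        (u := Finset.univ) (A := fun i s => x s i) (A' := fun i => v t i)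
        (fun i _ => hxc i t ht)
      rwa [sum_mulVec_zero hdiag hsymm (x t)] at this
    have ha : AntitoneOn (fun s => ∑ i, x s i) (Set.Ici 0) :=
      antitone_aux hds (fun t _ => le_refl 0)
    have hm : AntitoneOn (fun s => -∑ i, x s i) (Set.Ici 0) :=
      antitone_aux (f := fun s => -∑ i, x s i) (g := fun _ => 0)
        (fun t ht => by simpa using (hds t ht).fun_neg)
        (fun t _ => le_refl 0)
    intro t ht
    have h1 := ha (Set.self_mem_Ici) ht ht
    have h2 := hm (Set.self_mem_Ici) ht ht
    simp only [neg_le_neg_iff] at h2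
    have : ∑ i, x t i = ∑ i, x 0 i := le_antisymm h1 (by linarith)
    rw [this, hx0.2]
  -- derivative of V along the flow
  have hVd : ∀ t ∈ Set.Ici (0:ℝ),
      HasDerivWithinAt (fun s => Vfun xd (x s)) (- Ffun xd w (x t)) (Set.Ici 0) t := by
    intro t ht
    have hterm : ∀ i, HasDerivWithinAt (fun s => (x s i - xd i)^2 / xd i)
        (2 * (x t i - xd i) / xd i * v t i) (Set.Ici 0) t := by
      intro i
      have h1 := ((hxc i t ht).sub_const (xd i)).fun_pow 2
      have h2 := h1.div_const (xd i)
      convert h2 using 1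
      · rfl
      · rfl
      · ring
    have hs := HasDerivWithinAt.fun_sum (u := Finset.univ)
      (A := fun i s => (x s i - xd i)^2 / xd i)
      (A' := fun i => 2 * (x t i - xd i) / xd i * v t i)
      (fun i _ => hterm i)
    have hW := W_eq hpos hdiag hsymm (x t)
    have hvt : (Gmat xd w (x t))ᵀ.mulVec ((Dmat xd).mulVec (x t)) = v t := rfl
    rw [hvt] at hW
    rw [← hW]
    simpa [Vfun] using hs
  -- V is antitone along the flow
  have hanti : AntitoneOn (fun s => Vfun xd (x s)) (Set.Ici 0) :=
    antitone_aux hVd (fun t _ => neg_nonpos.2 (Ffun_nonneg h01 (x t)))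
  set c := Vfun xd (x 0) with hcdef
  have hc0 : 0 ≤ c := Vfun_nonneg hpos (x 0)
  have hVle : ∀ t ∈ Set.Ici (0:ℝ), Vfun xd (x t) ≤ c :=
    fun t ht => hanti Set.self_mem_Ici ht ht
  have hxd1 : ∀ i, xd i ≤ 1 := by
    intro i
    have := Finset.single_le_sum (f := fun j => xd j) (fun j _ => (hpos j).le) (Finset.mem_univ i)
    linarith [hxdsum]
  -- V tends to 0
  have hVlim : Tendsto (fun t => Vfun xd (x t)) atTop (nhds 0) := by
    rw [Metric.tendsto_atTop]
    intro ε hε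
    -- find T with V (x T) < ε
    have hT : ∃ T : ℝ, 0 ≤ T ∧ Vfun xd (x T) < ε := by
      by_contra hcon
      push_neg at hcon
      -- all t ≥ 0 stay in the compact set K
      have hK : ∀ t ∈ Set.Ici (0:ℝ),
          (∑ i, x t i = 1) ∧ ε ≤ Vfun xd (x t) ∧ Vfun xd (x t) ≤ c :=
        fun t ht => ⟨hsum1 t ht, hcon t ht, hVle t ht⟩
      set K := {p : Fin M → ℝ | (∑ i, p i = 1) ∧ ε ≤ Vfun xd p ∧ Vfun xd p ≤ c} with hKdef
      have hKc : IsCompact K := isCompact_K hpos hxd1 ε c hc0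
      have hKne : K.Nonempty := ⟨x 0, hK 0 Set.self_mem_Ici⟩
      obtain ⟨p0, hp0K, hp0min⟩ := hKc.exists_isMinOn hKne Ffun_continuous.continuousOn
      set δ := Ffun xd w p0 with hδdef
      have hδpos : 0 < δ := by
        apply Ffun_pos hpos hxdsum h01 hconn p0 hp0K.1
        intro hpe
        have : Vfun xd p0 = 0 := by rw [hpe]; exact (Vfun_eq_zero_iff hpos xd).2 rfl
        have := hp0K.2.1
        linarith [hε]
      have hFδ : ∀ t ∈ Set.Ici (0:ℝ), δ ≤ Ffun xd w (x t) :=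
        fun t ht => hp0min (hK t ht)
      -- h(t) = V(x t) + δ t is antitone
      have hantih : AntitoneOn (fun s => Vfun xd (x s) + δ * s) (Set.Ici 0) := by
        apply antitone_aux (g := fun t => - Ffun xd w (x t) + δ)
        · intro t ht
          have hid : HasDerivWithinAt (fun s : ℝ => δ * s) δ (Set.Ici 0) t := by
            simpa using (hasDerivWithinAt_id t (Set.Ici 0)).const_mul δ
          exact (hVd t ht).add hid
        · intro t ht
          have := hFδ t (Set.Ioi_subset_Ici_self ht)
          linarith
      -- contradiction at large time
      set T := (c + 1) / δ with hTdef
      have hTpos : 0 ≤ T := div_nonneg (by linarith) hδpos.le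
      have := hantih Set.self_mem_Ici hTpos hTpos
      have hδT : δ * T = c + 1 := by
        rw [hTdef]; field_simp
      have hVT := Vfun_nonneg hpos (x T)
      simp only [mul_zero, add_zero] at this
      rw [hδT] at this
      linarith
    obtain ⟨T, hT0, hTlt⟩ := hT
    refine ⟨T, fun t ht => ?_⟩
    have htI : t ∈ Set.Ici (0:ℝ) := le_trans hT0 ht
    have h1 : Vfun xd (x t) ≤ Vfun xd (x T) := hanti (Set.mem_Ici.2 hT0) htI ht
    have h2 : 0 ≤ Vfun xd (x t) := Vfun_nonneg hpos (x t)
    rw [Real.dist_eq, abs_sub_comm, abs_of_nonpos (by linarith)]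
    simp only [neg_sub, sub_zero]
    linarith
  -- coordinatewise convergence
  rw [tendsto_pi_nhds]
  intro i
  have hub : Tendsto (fun t => xd i * Vfun xd (x t)) atTop (nhds 0) := by
    simpa using hVlim.const_mul (xd i)
  have hsq : Tendsto (fun t => (x t i - xd i)^2) atTop (nhds 0) :=
    tendsto_of_tendsto_of_tendsto_of_le_of_le' tendsto_const_nhds hub
      (Eventually.of_forall fun t => sq_nonneg _)
      (Eventually.of_forall fun t => coord_sq_le_V hpos (x t) i)
  have habs : Tendsto (fun t => |x t i - xd i|) atTop (nhds 0) := by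
    have h := (Real.continuous_sqrt.tendsto 0).comp hsq
    simp only [Function.comp_def, Real.sqrt_sq_eq_abs, Real.sqrt_zero] at h
    exact h
  have hzero : Tendsto (fun t => x t i - xd i) atTop (nhds 0) := by
    have hlow : Tendsto (fun t => -|x t i - xd i|) atTop (nhds 0) := by
      simpa using habs.neg
    exact tendsto_of_tendsto_of_tendsto_of_le_of_le' hlow habs
      (Eventually.of_forall fun t => neg_abs_le _)
      (Eventually.of_forall fun t => le_abs_self _)
  have := hzero.add_const (xd i)
  simpa using this
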